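/- Let G(T) be the threshold graph on {1,…,n} with construction sequence T and Laplacian matrix L. For every i with 2 ≤ i ≤ n, the vector C(i−1) ∈ ℝ^n satisfies L·C(i−1) = (d(i) + [T(i) = 1])·C(i−1), where [T(i) = 1] denotes 1 if T(i) = 1 and 0 otherwise; that is, C(i−1) is an eigenvector of L with eigenvalue d(i) if T(i) = 0 and with eigenvalue d(i) + 1 if T(i) = 1. -/

import Mathlib

open Finset Matrix Polynomial

/-- The threshold graph on `Fin n` (vertex `i` of the paper corresponds to `⟨i-1, _⟩ : Fin n`)
with construction sequence `T` : two distinct vertices are adjacent iff the later one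
(in the construction order) was added by a join operation. -/
def thresholdGraph (n : ℕ) (T : Fin n → Bool) : SimpleGraph (Fin n) where
  Adj i j := i ≠ j ∧ T (max i j) = true
  symm := by
    constructor
    intro i j h
    exact ⟨h.1.symm, by rw [max_comm]; exact h.2⟩
  loopless := by
    constructor
    intro i h
    exact h.1 rfl

instance thresholdGraph.instDecidableRelAdj (n : ℕ) (T : Fin n → Bool) :
    DecidableRel (thresholdGraph n T).Adj :=
  fun i j => decidable_of_iff (i ≠ j ∧ T (max i j) = true) Iff.rfl

/-- `Cvec n k` is the vector `C(k) ∈ ℝ^n` of the paper: its first `k` entries equal `1`, its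
`(k+1)`-st entry equals `−k`, and its remaining entries equal `0` (0-indexed over `Fin n`). -/
def Cvec (n k : ℕ) : Fin n → ℝ := fun j =>
  if (j : ℕ) < k then 1 else if (j : ℕ) = k then -(k : ℝ) else 0

lemma count_lt (n k : ℕ) (hk : k ≤ n) :
    ∑ u : Fin n, (if (u : ℕ) < k then (1:ℝ) else 0) = k := by
  rw [Fin.sum_univ_eq_sum_range (fun m => if m < k then (1:ℝ) else 0) n]
  rw [Finset.range_eq_Ico, ← Finset.sum_Ico_consecutive _ (Nat.zero_le k) hk]
  rw [Finset.sum_ite_of_true, Finset.sum_ite_of_false]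
  · simp
  · intro m hm; simp at hm; omega
  · intro m hm; simp at hm; omega

lemma sum_Cvec (n k : ℕ) (hk : k < n) : ∑ u : Fin n, Cvec n k u = 0 := by
  have h : ∀ u : Fin n, Cvec n k u =
      (if (u : ℕ) < k then (1:ℝ) else 0) + (if u = (⟨k, hk⟩ : Fin n) then -(k:ℝ) else 0) := by
    intro u
    unfold Cvec
    rcases lt_trichotomy (u : ℕ) k with h | h | h
    · simp [h, Fin.ext_iff, Nat.ne_of_lt h]
    · simp [h, Fin.ext_iff, lt_irrefl]
    · simp [Fin.ext_iff, Nat.lt_asymm h, (Nat.ne_of_gt h), not_lt.mpr (le_of_lt h)]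
  rw [Finset.sum_congr rfl (fun u _ => h u), Finset.sum_add_distrib, count_lt n k hk.le,
    Finset.sum_ite_eq' _ _ (fun _ => -(k:ℝ))]
  simp

lemma deg_sum (n : ℕ) (T : Fin n → Bool) (v : Fin n) :
    ((thresholdGraph n T).degree v : ℝ) =
      ∑ u : Fin n, (if v ≠ u ∧ T (max v u) = true then (1:ℝ) else 0) := by
  rw [SimpleGraph.degree, SimpleGraph.neighborFinset_eq_filter, Finset.card_filter]
  push_cast
  exact Finset.sum_congr rfl fun u _ => if_congr Iff.rfl rfl rfl

lemma nbr_sum (n : ℕ) (T : Fin n → Bool) (v : Fin n) (f : Fin n → ℝ) :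
    ∑ u ∈ (thresholdGraph n T).neighborFinset v, f u =
      ∑ u : Fin n, (if v ≠ u ∧ T (max v u) = true then f u else 0) := by
  rw [SimpleGraph.neighborFinset_eq_filter, Finset.sum_filter]
  exact Finset.sum_congr rfl fun u _ => if_congr Iff.rfl rfl rfl

set_option maxHeartbeats 2000000 in
theorem lapMatrix_mulVec_Cvec_thresholdGraph (n : ℕ) (T : Fin n → Bool) (hn : 0 < n)
    (hT1 : T ⟨0, hn⟩ = false) (i : Fin n) (hi : (i : ℕ) ≠ 0) :
    (thresholdGraph n T).lapMatrix ℝ *ᵥ Cvec n (i : ℕ) =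
      (((thresholdGraph n T).degree i : ℝ) + (if T i = true then 1 else 0)) •
        Cvec n (i : ℕ) := by
  funext j
  rw [SimpleGraph.lapMatrix_mulVec_apply, nbr_sum, Pi.smul_apply, smul_eq_mul]
  have hk : (i : ℕ) < n := i.isLt
  have hcnt : ∀ b : ℝ, ∑ u : Fin n, (if (u : ℕ) < (i : ℕ) then b else 0) = b * (i : ℕ) := by
    intro b
    have h : ∀ u : Fin n, (if (u : ℕ) < (i : ℕ) then b else 0)
        = b * (if (u : ℕ) < (i : ℕ) then (1:ℝ) else 0) := by
      intro u; split <;> ring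
    rw [Finset.sum_congr rfl fun u _ => h u, ← Finset.mul_sum, count_lt n (i : ℕ) hk.le]
  have hCvec_hi : ∀ u : Fin n, (i : ℕ) < (u : ℕ) → Cvec n (i : ℕ) u = 0 := by
    intro u hu
    unfold Cvec
    rw [if_neg (by omega), if_neg (by omega)]
  have hCvec_lo : ∀ u : Fin n, (u : ℕ) < (i : ℕ) → Cvec n (i : ℕ) u = 1 := by
    intro u hu
    unfold Cvec
    rw [if_pos hu]
  have hCvec_i : Cvec n (i : ℕ) i = -((i : ℕ) : ℝ) := by
    unfold Cvec
    rw [if_neg (lt_irrefl _), if_pos rfl]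
  rcases lt_trichotomy (j : ℕ) (i : ℕ) with hj | hj | hj
  · -- j before i
    have hji : j ≠ i := fun h => absurd (congrArg Fin.val h) (by omega)
    rw [hCvec_lo j hj]
    have hdegj : ((thresholdGraph n T).degree j : ℝ) =
        ∑ u : Fin n, ((if (u : ℕ) < (i : ℕ) ∧ (j ≠ u ∧ T (max j u) = true) then (1:ℝ) else 0)
          + ((if u = i then (if T i = true then (1:ℝ) else 0) else 0)
          + (if (i : ℕ) < (u : ℕ) ∧ T u = true then (1:ℝ) else 0))) := by
      rw [deg_sum]
      refine Finset.sum_congr rfl fun u _ => ?_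
      rcases lt_trichotomy (u : ℕ) (i : ℕ) with hu | hu | hu
      · have hui : u ≠ i := fun h => absurd (congrArg Fin.val h) (by omega)
        have h2 : ¬ (i : ℕ) < (u : ℕ) := by omega
        split_ifs <;> first | ring1 | tauto
      · have hui : u = i := Fin.ext hu
        have hmax : max j u = u := max_eq_right (by rw [Fin.le_def]; omega)
        have hju : j ≠ u := fun h => absurd (congrArg Fin.val h) (by omega)
        rw [hmax, hui]
        have h2 : ¬ (i : ℕ) < (i : ℕ) := lt_irrefl _
        have hji' : j ≠ i := hji
        split_ifs <;> first | ring1 | tauto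
      · have hui : u ≠ i := fun h => absurd (congrArg Fin.val h) (by omega)
        have hmax : max j u = u := max_eq_right (by rw [Fin.le_def]; omega)
        have hju : j ≠ u := fun h => absurd (congrArg Fin.val h) (by omega)
        have h2 : ¬ (u : ℕ) < (i : ℕ) := by omega
        rw [hmax]
        split_ifs <;> first | ring1 | tauto
    have hdegi : ((thresholdGraph n T).degree i : ℝ) =
        ∑ u : Fin n, ((if (u : ℕ) < (i : ℕ) then (if T i = true then (1:ℝ) else 0) else 0)
          + (if (i : ℕ) < (u : ℕ) ∧ T u = true then (1:ℝ) else 0)) := by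
      rw [deg_sum]
      refine Finset.sum_congr rfl fun u _ => ?_
      rcases lt_trichotomy (u : ℕ) (i : ℕ) with hu | hu | hu
      · have hmax : max i u = i := max_eq_left (by rw [Fin.le_def]; omega)
        have hiu : i ≠ u := fun h => absurd (congrArg Fin.val h) (by omega)
        have h2 : ¬ (i : ℕ) < (u : ℕ) := by omega
        rw [hmax]
        split_ifs <;> first | ring1 | tauto
      · have hui : u = i := Fin.ext hu
        rw [hui]
        have h2 : ¬ (i : ℕ) < (i : ℕ) := lt_irrefl _
        have h3 : ¬ (i ≠ i) := fun h => h rfl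
        split_ifs <;> first | ring1 | tauto
      · have hmax : max i u = u := max_eq_right (by rw [Fin.le_def]; omega)
        have hiu : i ≠ u := fun h => absurd (congrArg Fin.val h) (by omega)
        have h2 : ¬ (u : ℕ) < (i : ℕ) := by omega
        rw [hmax]
        split_ifs <;> first | ring1 | tauto
    have hnbr : ∑ u : Fin n, (if j ≠ u ∧ T (max j u) = true then Cvec n (i : ℕ) u else 0) =
        ∑ u : Fin n, ((if (u : ℕ) < (i : ℕ) ∧ (j ≠ u ∧ T (max j u) = true) then (1:ℝ) else 0)
          + (if u = i then (if T i = true then -((i : ℕ):ℝ) else 0) else 0)) := by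
      refine Finset.sum_congr rfl fun u _ => ?_
      rcases lt_trichotomy (u : ℕ) (i : ℕ) with hu | hu | hu
      · have hui : u ≠ i := fun h => absurd (congrArg Fin.val h) (by omega)
        rw [hCvec_lo u hu]
        split_ifs <;> first | ring1 | tauto
      · have hui : u = i := Fin.ext hu
        have hmax : max j u = u := max_eq_right (by rw [Fin.le_def]; omega)
        rw [hmax, hui, hCvec_i]
        have h2 : ¬ (i : ℕ) < (i : ℕ) := lt_irrefl _
        split_ifs <;> first | ring1 | tauto
      · have hui : u ≠ i := fun h => absurd (congrArg Fin.val h) (by omega)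
        have h2 : ¬ (u : ℕ) < (i : ℕ) := by omega
        rw [hCvec_hi u hu]
        split_ifs <;> first | ring1 | tauto
    rw [hdegj, hdegi, hnbr, Finset.sum_add_distrib, Finset.sum_add_distrib,
      Finset.sum_add_distrib, Finset.sum_add_distrib,
      Finset.sum_ite_eq' _ i (fun _ => (if T i = true then (1:ℝ) else 0)),
      Finset.sum_ite_eq' _ i (fun _ => (if T i = true then -((i : ℕ):ℝ) else 0)),
      hcnt]
    simp only [Finset.mem_univ, if_true]
    have ht : (if T i = true then -((i : ℕ):ℝ) else 0)
        = -((i : ℕ):ℝ) * (if T i = true then (1:ℝ) else 0) := by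
      split <;> ring
    rw [ht]
    ring
  · -- j = i
    have hji : j = i := Fin.ext hj
    subst hji
    rw [hCvec_i]
    have hnbr : ∑ u : Fin n, (if j ≠ u ∧ T (max j u) = true then Cvec n (j : ℕ) u else 0) =
        ∑ u : Fin n, (if (u : ℕ) < (j : ℕ) then (if T j = true then (1:ℝ) else 0) else 0) := by
      refine Finset.sum_congr rfl fun u _ => ?_
      rcases lt_trichotomy (u : ℕ) (j : ℕ) with hu | hu | hu
      · have hmax : max j u = j := max_eq_left (by rw [Fin.le_def]; omega)
        have hju : j ≠ u := fun h => absurd (congrArg Fin.val h) (by omega)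
        rw [hmax, hCvec_lo u hu]
        split_ifs <;> first | ring1 | tauto
      · have hui : u = j := Fin.ext hu
        rw [hui]
        have h2 : ¬ (j : ℕ) < (j : ℕ) := lt_irrefl _
        have h3 : ¬ (j ≠ j) := fun h => h rfl
        split_ifs <;> first | ring1 | tauto
      · have h2 : ¬ (u : ℕ) < (j : ℕ) := by omega
        rw [hCvec_hi u hu]
        split_ifs <;> first | ring1 | tauto
    rw [hnbr, hcnt]
    ring
  · -- j after i
    have hCj : Cvec n (i : ℕ) j = 0 := hCvec_hi j hj
    rw [hCj]
    have hnbr : ∑ u : Fin n, (if j ≠ u ∧ T (max j u) = true then Cvec n (i : ℕ) u else 0) =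
        ∑ u : Fin n, ((if T j = true then (1:ℝ) else 0) * Cvec n (i : ℕ) u) := by
      refine Finset.sum_congr rfl fun u _ => ?_
      rcases lt_trichotomy (u : ℕ) (j : ℕ) with hu | hu | hu
      · have hmax : max j u = j := max_eq_left (by rw [Fin.le_def]; omega)
        have hju : j ≠ u := fun h => absurd (congrArg Fin.val h) (by omega)
        rw [hmax]
        split_ifs <;> first | ring1 | tauto
      · have hui : u = j := Fin.ext hu
        rw [hui, hCj]
        have h3 : ¬ (j ≠ j) := fun h => h rfl
        split_ifs <;> first | ring1 | tauto
      · have hCu : Cvec n (i : ℕ) u = 0 := hCvec_hi u (by omega)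
        rw [hCu]
        split_ifs <;> first | ring1 | tauto
    rw [hnbr, ← Finset.mul_sum, sum_Cvec n (i : ℕ) hk]
    ring
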